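/- arXiv:1508.05231 — 4 statements merged into one kernel-verified Lean document; each statement's English description precedes it below -/
import Mathlib

section
/- If s > 0, then for any z₀ ∈ [0,1], the function z(t) = (x₀⁺(z₀ - x₀⁻) - x₀⁻(z₀ - x₀⁺) e^{-s(x₀⁺ - x₀⁻) t}) / ((z₀ - x₀⁻) - (z₀ - x₀⁺) e^{-s(x₀⁺ - x₀⁻) t}) satisfies z(0) = z₀ and z'(t) = F(z(t)) for all t ≥ 0 (the denominator never vanishes for t ≥ 0). -/
lemma quot_deriv_eq_aux (s a m p E D : ℝ) (hD : D = a - m - (a - p) * E) (hD0 : D ≠ 0) :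
    (-(m * (a - p) * (E * (-s * (p - m)))) * D -
        (p * (a - m) - m * (a - p) * E) * -((a - p) * (E * (-s * (p - m))))) / D ^ 2 =
      -s * ((p * (a - m) - m * (a - p) * E) / D - m) *
        ((p * (a - m) - m * (a - p) * E) / D - p) := by
  subst hD
  field_simp
  ring

theorem stmt_7 (s u ν₀ ν₁ : ℝ) (hs : 0 < s) (hu : 0 < u)
    (hν₀ : ν₀ ∈ Set.Ioo (0:ℝ) 1) (hν₁ : ν₁ ∈ Set.Ioo (0:ℝ) 1) (hsum : ν₀ + ν₁ = 1)
    (F : ℝ → ℝ) (hF : ∀ x, F x = -s * x ^ 2 + (s - u) * x + u * ν₀)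
    (Δ x₀m x₀p : ℝ) (hΔ : Δ = (s - u) ^ 2 + 4 * s * u * ν₀)
    (hm : x₀m = (s - u - Real.sqrt Δ) / (2 * s))
    (hp : x₀p = (s - u + Real.sqrt Δ) / (2 * s))
    (z₀ : ℝ) (hz₀ : z₀ ∈ Set.Icc (0:ℝ) 1)
    (z : ℝ → ℝ)
    (hz : ∀ t, z t = (x₀p * (z₀ - x₀m) - x₀m * (z₀ - x₀p) * Real.exp (-s * (x₀p - x₀m) * t)) /
      ((z₀ - x₀m) - (z₀ - x₀p) * Real.exp (-s * (x₀p - x₀m) * t))) :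
    (∀ t, 0 ≤ t → (z₀ - x₀m) - (z₀ - x₀p) * Real.exp (-s * (x₀p - x₀m) * t) ≠ 0) ∧
    z 0 = z₀ ∧ ∀ t, 0 ≤ t → HasDerivAt z (F (z t)) t := by
  obtain ⟨hν₀0, hν₀1⟩ := hν₀
  obtain ⟨hz₀0, hz₀1⟩ := hz₀
  have hsuv : 0 < s * u * ν₀ := by positivity
  have hΔpos : 0 < Δ := by nlinarith [sq_nonneg (s - u)]
  set r := Real.sqrt Δ with hrdef
  have hr2 : r ^ 2 = (s - u) ^ 2 + 4 * s * u * ν₀ := by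
    rw [hrdef, Real.sq_sqrt hΔpos.le, hΔ]
  have hrpos : 0 < r := Real.sqrt_pos.mpr hΔpos
  have hmlt : x₀m < 0 := by
    rw [hm]
    apply div_neg_of_neg_of_pos _ (by linarith)
    nlinarith [hr2, hrpos, hsuv]
  have hdiff : x₀p - x₀m = r / s := by rw [hm, hp]; field_simp; ring
  have hdpos : 0 < x₀p - x₀m := by rw [hdiff]; positivity
  have h1 : s * (x₀m + x₀p) = s - u := by rw [hm, hp]; field_simp; ring
  have hprod : (s - u - r) * (s - u + r) = -(4 * s * u * ν₀) := by linear_combination -hr2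
  have h2 : s * (x₀m * x₀p) = -(u * ν₀) := by
    rw [hm, hp]
    rw [div_mul_div_comm, hprod]
    field_simp
    ring
  have hFfact : ∀ x, F x = -s * (x - x₀m) * (x - x₀p) := by
    intro x
    rw [hF]
    linear_combination (-x) * h1 + h2
  have hden : ∀ t, 0 ≤ t →
      0 < (z₀ - x₀m) - (z₀ - x₀p) * Real.exp (-s * (x₀p - x₀m) * t) := by
    intro t ht
    have hE1 : Real.exp (-s * (x₀p - x₀m) * t) ≤ 1 := by
      rw [Real.exp_le_one_iff]
      nlinarith [mul_nonneg (mul_pos hs hdpos).le ht]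
    have hE0 : 0 < Real.exp (-s * (x₀p - x₀m) * t) := Real.exp_pos _
    rcases le_or_gt (z₀ - x₀p) 0 with hB | hB
    · nlinarith
    · nlinarith
  have hz0 : z 0 = z₀ := by
    rw [hz 0, mul_zero, Real.exp_zero]
    rw [div_eq_iff (by nlinarith : (z₀ - x₀m) - (z₀ - x₀p) * 1 ≠ 0)]
    ring
  refine ⟨fun t ht => (hden t ht).ne', hz0, ?_⟩
  intro t ht
  have hd := hden t ht
  have h0 : HasDerivAt (fun τ : ℝ => -s * (x₀p - x₀m) * τ) (-s * (x₀p - x₀m)) t := by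
    simpa using (hasDerivAt_id t).const_mul (-s * (x₀p - x₀m))
  have hE : HasDerivAt (fun τ => Real.exp (-s * (x₀p - x₀m) * τ))
      (Real.exp (-s * (x₀p - x₀m) * t) * (-s * (x₀p - x₀m))) t := h0.exp
  have hN : HasDerivAt
      (fun τ => x₀p * (z₀ - x₀m) - x₀m * (z₀ - x₀p) * Real.exp (-s * (x₀p - x₀m) * τ))
      (-(x₀m * (z₀ - x₀p) * (Real.exp (-s * (x₀p - x₀m) * t) * (-s * (x₀p - x₀m))))) t :=
    (hE.const_mul (x₀m * (z₀ - x₀p))).const_sub _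
  have hD : HasDerivAt
      (fun τ => (z₀ - x₀m) - (z₀ - x₀p) * Real.exp (-s * (x₀p - x₀m) * τ))
      (-((z₀ - x₀p) * (Real.exp (-s * (x₀p - x₀m) * t) * (-s * (x₀p - x₀m))))) t :=
    (hE.const_mul (z₀ - x₀p)).const_sub _
  have hQ := hN.div hD hd.ne'
  have hzf : z = fun τ =>
      (x₀p * (z₀ - x₀m) - x₀m * (z₀ - x₀p) * Real.exp (-s * (x₀p - x₀m) * τ)) /
      ((z₀ - x₀m) - (z₀ - x₀p) * Real.exp (-s * (x₀p - x₀m) * τ)) := funext hz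
  rw [hzf]
  refine hQ.congr_deriv (Eq.symm ?_)
  rw [hFfact]
  exact (quot_deriv_eq_aux s z₀ x₀m x₀p (Real.exp (-s * (x₀p - x₀m) * t)) _ rfl hd.ne').symm
end

section
/- If y : [0,∞) → ℝ² solves the linear system y'(t) = y(t) A with y(0) = (z₀, 1-z₀), z₀ ∈ [0,1], and y₀(t) + y₁(t) > 0 for all t, then the ratio z(t) = y₀(t)/(y₀(t)+y₁(t)) satisfies z'(t) = F(z(t)), where F(x) = s x(1-x) + u ν₀ (1-x) - u ν₁ x. -/
theorem stmt_12 (s u ν₀ ν₁ : ℝ) (hs : 0 ≤ s) (hu : 0 ≤ u)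
    (hν₀ : ν₀ ∈ Set.Ioo (0:ℝ) 1) (hν₁ : ν₁ ∈ Set.Ioo (0:ℝ) 1) (hsum : ν₀ + ν₁ = 1)
    (F : ℝ → ℝ) (hF : ∀ x, F x = s * x * (1 - x) + u * ν₀ * (1 - x) - u * ν₁ * x)
    (z₀ : ℝ) (hz₀ : z₀ ∈ Set.Icc (0:ℝ) 1)
    (y₀ y₁ : ℝ → ℝ) (hy₀0 : y₀ 0 = z₀) (hy₁0 : y₁ 0 = 1 - z₀)
    (hy₀ : ∀ t, 0 ≤ t → HasDerivAt y₀ ((1 + s - u * ν₁) * y₀ t + u * ν₀ * y₁ t) t)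
    (hy₁ : ∀ t, 0 ≤ t → HasDerivAt y₁ (u * ν₁ * y₀ t + (1 - u * ν₀) * y₁ t) t)
    (hpos : ∀ t, 0 ≤ t → 0 < y₀ t + y₁ t)
    (z : ℝ → ℝ) (hz : ∀ t, z t = y₀ t / (y₀ t + y₁ t)) :
    ∀ t, 0 ≤ t → HasDerivAt z (F (z t)) t := by
  intro t ht
  have hz' : z = fun t => y₀ t / (y₀ t + y₁ t) := funext hz
  have hw : (y₀ t + y₁ t) ≠ 0 := (hpos t ht).ne'
  have hd := ((hy₀ t ht).div ((hy₀ t ht).add (hy₁ t ht)) hw)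
  rw [hz']
  refine hd.congr_deriv ?_
  rw [hF]
  beta_reduce
  have h1 : ν₁ = 1 - ν₀ := by linarith
  simp only [Pi.add_apply, h1]
  field_simp [h1]
  ring
end

section
/- For s > 0 and initial condition y(0) = (z₀, 1-z₀), the solution of y'(t) = y(t)A is given explicitly by y₀(t) = e^{(1+s x₀⁺)t}/(x₀⁺-x₀⁻) · (x₀⁺(z₀-x₀⁻) - x₀⁻(z₀-x₀⁺) e^{-s(x₀⁺-x₀⁻)t}) and y₁(t) = e^{(1+s x₀⁺)t}/(x₀⁺-x₀⁻) · ((1-x₀⁺)(z₀-x₀⁻) - (1-x₀⁻)(z₀-x₀⁺) e^{-s(x₀⁺-x₀⁻)t}); i.e. these functions satisfy y(0) = (z₀, 1-z₀) and y'(t) = y(t)A for all t ≥ 0. -/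
theorem stmt_14 (s u ν₀ ν₁ : ℝ) (hs : 0 < s) (hu : 0 < u)
    (hν₀ : ν₀ ∈ Set.Ioo (0:ℝ) 1) (hν₁ : ν₁ ∈ Set.Ioo (0:ℝ) 1) (hsum : ν₀ + ν₁ = 1)
    (Δ x₀m x₀p : ℝ) (hΔ : Δ = (s - u) ^ 2 + 4 * s * u * ν₀)
    (hm : x₀m = (s - u - Real.sqrt Δ) / (2 * s))
    (hp : x₀p = (s - u + Real.sqrt Δ) / (2 * s))
    (z₀ : ℝ) (hz₀ : z₀ ∈ Set.Icc (0:ℝ) 1)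
    (y₀ y₁ : ℝ → ℝ)
    (hy₀ : ∀ t, y₀ t = Real.exp ((1 + s * x₀p) * t) / (x₀p - x₀m) *
      (x₀p * (z₀ - x₀m) - x₀m * (z₀ - x₀p) * Real.exp (-s * (x₀p - x₀m) * t)))
    (hy₁ : ∀ t, y₁ t = Real.exp ((1 + s * x₀p) * t) / (x₀p - x₀m) *
      ((1 - x₀p) * (z₀ - x₀m) - (1 - x₀m) * (z₀ - x₀p) * Real.exp (-s * (x₀p - x₀m) * t))) :
    y₀ 0 = z₀ ∧ y₁ 0 = 1 - z₀ ∧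
    (∀ t, 0 ≤ t → HasDerivAt y₀ ((1 + s - u * ν₁) * y₀ t + u * ν₀ * y₁ t) t) ∧
    (∀ t, 0 ≤ t → HasDerivAt y₁ (u * ν₁ * y₀ t + (1 - u * ν₀) * y₁ t) t) := by
  obtain ⟨hν₀0, hν₀1⟩ := hν₀
  have hΔpos : 0 < Δ := by
    rw [hΔ]; positivity
  have hq2 : Real.sqrt Δ ^ 2 = Δ := Real.sq_sqrt hΔpos.le
  have hqpos : 0 < Real.sqrt Δ := Real.sqrt_pos.mpr hΔpos
  have hdpos : 0 < x₀p - x₀m := by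
    rw [hp, hm]
    rw [div_sub_div_same]
    apply div_pos (by linarith) (by linarith)
  have hdne : x₀p - x₀m ≠ 0 := ne_of_gt hdpos
  have hν1 : ν₁ = 1 - ν₀ := by linarith
  -- root equations
  have hrp : s * x₀p ^ 2 - (s - u) * x₀p - u * ν₀ = 0 := by
    rw [hp]
    field_simp
    nlinarith [hq2]
  have hrm : s * x₀m ^ 2 - (s - u) * x₀m - u * ν₀ = 0 := by
    rw [hm]
    field_simp
    nlinarith [hq2]
  -- coefficients
  set A1 : ℝ := x₀p * (z₀ - x₀m) / (x₀p - x₀m) with hA1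
  set B1 : ℝ := -(x₀m * (z₀ - x₀p)) / (x₀p - x₀m) with hB1
  set A2 : ℝ := (1 - x₀p) * (z₀ - x₀m) / (x₀p - x₀m) with hA2
  set B2 : ℝ := -((1 - x₀m) * (z₀ - x₀p)) / (x₀p - x₀m) with hB2
  have hf : y₀ = fun t => A1 * Real.exp ((1 + s * x₀p) * t) + B1 * Real.exp ((1 + s * x₀m) * t) := by
    funext t
    rw [hy₀, show (1 + s * x₀m) * t = (1 + s * x₀p) * t + -s * (x₀p - x₀m) * t by ring,
      Real.exp_add, hA1, hB1]
    field_simp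
    ring
  have hg : y₁ = fun t => A2 * Real.exp ((1 + s * x₀p) * t) + B2 * Real.exp ((1 + s * x₀m) * t) := by
    funext t
    rw [hy₁, show (1 + s * x₀m) * t = (1 + s * x₀p) * t + -s * (x₀p - x₀m) * t by ring,
      Real.exp_add, hA2, hB2]
    field_simp
    ring
  have hE : ∀ (c t : ℝ), HasDerivAt (fun x => Real.exp (c * x)) (c * Real.exp (c * t)) t := by
    intro c t
    exact ((Real.hasDerivAt_exp (c * t)).comp t ((hasDerivAt_id t).const_mul c)).congr_deriv (by ring)
  -- coefficient identities
  have c1 : (1 + s * x₀p) * A1 = (1 + s - u * ν₁) * A1 + u * ν₀ * A2 := by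
    rw [hA1, hA2, hν1]
    linear_combination ((z₀ - x₀m) / (x₀p - x₀m)) * hrp
  have c2 : (1 + s * x₀m) * B1 = (1 + s - u * ν₁) * B1 + u * ν₀ * B2 := by
    rw [hB1, hB2, hν1]
    linear_combination (-(z₀ - x₀p) / (x₀p - x₀m)) * hrm
  have c3 : (1 + s * x₀p) * A2 = u * ν₁ * A1 + (1 - u * ν₀) * A2 := by
    rw [hA1, hA2, hν1]
    linear_combination (-(z₀ - x₀m) / (x₀p - x₀m)) * hrp
  have c4 : (1 + s * x₀m) * B2 = u * ν₁ * B1 + (1 - u * ν₀) * B2 := by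
    rw [hB1, hB2, hν1]
    linear_combination ((z₀ - x₀p) / (x₀p - x₀m)) * hrm
  refine ⟨?_, ?_, ?_, ?_⟩
  · rw [hy₀]
    norm_num
    field_simp
    ring
  · rw [hy₁]
    norm_num
    field_simp
    ring
  · intro t _
    rw [hf]
    have h := ((hE (1 + s * x₀p) t).const_mul A1).add ((hE (1 + s * x₀m) t).const_mul B1)
    refine h.congr_deriv ?_
    symm
    simp only [hf, hg, hν1]
    linear_combination (-(Real.exp ((1 + s * x₀p) * t) * (z₀ - x₀m)) / (x₀p - x₀m)) * hrp +
      ((Real.exp ((1 + s * x₀m) * t) * (z₀ - x₀p)) / (x₀p - x₀m)) * hrm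
  · intro t _
    rw [hg]
    have h := ((hE (1 + s * x₀p) t).const_mul A2).add ((hE (1 + s * x₀m) t).const_mul B2)
    refine h.congr_deriv ?_
    symm
    simp only [hf, hg, hν1]
    linear_combination ((Real.exp ((1 + s * x₀p) * t) * (z₀ - x₀m)) / (x₀p - x₀m)) * hrp +
      (-(Real.exp ((1 + s * x₀m) * t) * (z₀ - x₀p)) / (x₀p - x₀m)) * hrm
end

section
/- If s > 0 and z₀ ∈ [0,1] with z₀ ≠ x₀⁺, then the denominator D(t) = (z₀ - x₀⁻) - (z₀ - x₀⁺) e^{-s(x₀⁺-x₀⁻)t} of the explicit Riccati solution is strictly positive for all t ≥ 0. -/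
theorem stmt_18 (s u ν₀ ν₁ : ℝ) (hs : 0 < s) (hu : 0 < u)
    (hν₀ : ν₀ ∈ Set.Ioo (0:ℝ) 1) (hν₁ : ν₁ ∈ Set.Ioo (0:ℝ) 1) (hsum : ν₀ + ν₁ = 1)
    (Δ x₀m x₀p : ℝ) (hΔ : Δ = (s - u) ^ 2 + 4 * s * u * ν₀)
    (hm : x₀m = (s - u - Real.sqrt Δ) / (2 * s))
    (hp : x₀p = (s - u + Real.sqrt Δ) / (2 * s))
    (z₀ : ℝ) (hz₀ : z₀ ∈ Set.Icc (0:ℝ) 1) (hne : z₀ ≠ x₀p) :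
    ∀ t, 0 ≤ t → 0 < (z₀ - x₀m) - (z₀ - x₀p) * Real.exp (-s * (x₀p - x₀m) * t) := by
  have hΔpos : (s - u) ^ 2 < Δ := by
    rw [hΔ]; nlinarith [mul_pos (mul_pos hs hu) hν₀.1]
  have hsqrt : |s - u| < Real.sqrt Δ := by
    have := Real.sqrt_lt_sqrt (sq_nonneg (s - u)) hΔpos
    rwa [Real.sqrt_sq_eq_abs] at this
  obtain ⟨h1, h2⟩ := abs_lt.mp hsqrt
  have h2s : (0:ℝ) < 2 * s := by linarith
  have hmneg : x₀m < 0 := by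
    rw [hm]; exact div_neg_of_neg_of_pos (by linarith) h2s
  have hpp : x₀m < x₀p := by
    rw [hm, hp]
    have hsq : 0 < Real.sqrt Δ := lt_of_le_of_lt (abs_nonneg _) hsqrt
    exact div_lt_div_of_pos_right (by linarith) h2s
  intro t ht
  have hzm : 0 < z₀ - x₀m := by linarith [hz₀.1]
  have hexp_pos : 0 < Real.exp (-s * (x₀p - x₀m) * t) := Real.exp_pos _
  have hexp_le : Real.exp (-s * (x₀p - x₀m) * t) ≤ 1 := by
    apply Real.exp_le_one_iff.mpr
    have : 0 ≤ s * (x₀p - x₀m) * t := mul_nonneg (mul_nonneg hs.le (by linarith)) ht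
    nlinarith
  rcases lt_or_gt_of_ne hne with h | h
  · nlinarith
  · nlinarith
end
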